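/- Let G be an instance of the rank-maximal matching problem, let a be an applicant vertex of G, and let H be obtained from G by deleting a together with all edges incident on a. If M is a rank-maximal matching of G and M' is a rank-maximal matching of H, then |M| − 1 ≤ |M'| ≤ |M|. -/

import Mathlib

open SimpleGraph

variable {V : Type*}

/-- `M` is a matching in the graph `G`: a set of edges of `G` no two of which
share a vertex. -/
def IsMatchingIn (G : SimpleGraph V) (M : Set (Sym2 V)) : Prop :=
  M ⊆ G.edgeSet ∧ ∀ e ∈ M, ∀ f ∈ M, e ≠ f → ∀ v : V, v ∈ e → v ∉ f

/-- A vertex `v` is matched (covered) by the matching `M`. -/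
def IsMatchedBy (M : Set (Sym2 V)) (v : V) : Prop :=
  ∃ e ∈ M, v ∈ e

/-- The list of edges of a path given as a list of vertices. -/
def pathEdges (p : List V) : List (Sym2 V) :=
  (p.zip p.tail).map fun q => s(q.1, q.2)

/-- `p` is an alternating path from `u` to `v` in `G` with respect to the matching `M`:
its consecutive vertices are adjacent in `G`, it repeats no vertex, and its edges
alternate between edges in `M` and edges not in `M`. -/
def IsAltPath (G : SimpleGraph V) (M : Set (Sym2 V)) (u v : V) (p : List V) : Prop :=
  p.Chain' G.Adj ∧ p.Nodup ∧
    (pathEdges p).Chain' (fun e f => (e ∈ M ↔ f ∉ M)) ∧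
    p.head? = some u ∧ p.getLast? = some v

/-- `v` is even with respect to `M`: there is an even-length alternating path from
an `M`-unmatched vertex to `v`. -/
def EvenVtx (G : SimpleGraph V) (M : Set (Sym2 V)) (v : V) : Prop :=
  ∃ u p, ¬ IsMatchedBy M u ∧ IsAltPath G M u v p ∧ Even (pathEdges p).length

/-- `v` is odd with respect to `M`: there is an odd-length alternating path from
an `M`-unmatched vertex to `v`. -/
def OddVtx (G : SimpleGraph V) (M : Set (Sym2 V)) (v : V) : Prop :=
  ∃ u p, ¬ IsMatchedBy M u ∧ IsAltPath G M u v p ∧ Odd (pathEdges p).length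

/-- `v` is unreachable with respect to `M`: there is no alternating path from any
`M`-unmatched vertex to `v`. -/
def UnreachableVtx (G : SimpleGraph V) (M : Set (Sym2 V)) (v : V) : Prop :=
  ¬ ∃ u p, ¬ IsMatchedBy M u ∧ IsAltPath G M u v p

/-- `M` is a maximum (cardinality) matching in `G`. -/
def IsMaxMatching (G : SimpleGraph V) (M : Set (Sym2 V)) : Prop :=
  IsMatchingIn G M ∧ ∀ N, IsMatchingIn G N → N.ncard ≤ M.ncard

/-- `G` is bipartite with the two sides given by `side`. -/
def IsBipartiteWith (G : SimpleGraph V) (side : V → Bool) : Prop :=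
  ∀ u v, G.Adj u v → side u ≠ side v

/-- The signature of a matching: `signature rank M i` is the number of edges of
rank `i` in `M`. -/
noncomputable def signature (rank : Sym2 V → ℕ) (M : Set (Sym2 V)) (i : ℕ) : ℕ :=
  {e ∈ M | rank e = i}.ncard

/-- Lexicographic comparison of signatures on coordinates `1, …, r`:
`SigGt r x y` means `x ≻ y`. -/
def SigGt (r : ℕ) (x y : ℕ → ℕ) : Prop :=
  ∃ k, 1 ≤ k ∧ k ≤ r ∧ (∀ j, 1 ≤ j → j < k → x j = y j) ∧ y k < x k

/-- `M` is a rank-maximal matching of the instance `(G, rank)` with ranks in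
`{1, …, r}`: no matching of `G` has a lexicographically greater signature. -/
def IsRankMaximal (G : SimpleGraph V) (rank : Sym2 V → ℕ) (r : ℕ)
    (M : Set (Sym2 V)) : Prop :=
  IsMatchingIn G M ∧
    ∀ N, IsMatchingIn G N → ¬ SigGt r (signature rank N) (signature rank M)

/-- All edges of `G` carry a rank in `{1, …, r}`. -/
def RanksBounded (G : SimpleGraph V) (rank : Sym2 V → ℕ) (r : ℕ) : Prop :=
  ∀ e ∈ G.edgeSet, 1 ≤ rank e ∧ rank e ≤ r


attribute [local instance] Classical.propDecidable

namespace RMAux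

variable {V : Type*}

/-- Two edges share a vertex. -/
def Share (e f : Sym2 V) : Prop := ∃ v, v ∈ e ∧ v ∈ f

lemma Share.symm {e f : Sym2 V} (h : Share e f) : Share f e := by
  obtain ⟨v, hv, hv'⟩ := h; exact ⟨v, hv', hv⟩

lemma share_self (e : Sym2 V) : Share e e := by
  induction e using Sym2.ind with
  | _ x y => exact ⟨x, by simp, by simp⟩

/-- A finite set of pairwise vertex-disjoint edges. -/
def MatchF (S : Finset (Sym2 V)) : Prop :=
  ∀ e ∈ S, ∀ f ∈ S, e ≠ f → ∀ v : V, v ∈ e → v ∉ f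

lemma MatchF.mono {S T : Finset (Sym2 V)} (h : MatchF S) (hTS : T ⊆ S) : MatchF T :=
  fun e he f hf hne v hv => h e (hTS he) f (hTS hf) hne v hv

/-- Vertices covered by an edge set. -/
noncomputable def Vset [Fintype V] (C : Finset (Sym2 V)) : Finset V :=
  Finset.univ.filter fun v => ∃ e ∈ C, v ∈ e

lemma mem_Vset [Fintype V] {C : Finset (Sym2 V)} {v : V} :
    v ∈ Vset C ↔ ∃ e ∈ C, v ∈ e := by simp [Vset]

lemma Vset_mono [Fintype V] {C C' : Finset (Sym2 V)} (h : C ⊆ C') : Vset C ⊆ Vset C' := by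
  intro v hv
  rw [mem_Vset] at *
  obtain ⟨e, he, hve⟩ := hv
  exact ⟨e, h he, hve⟩

def Step (D : Finset (Sym2 V)) (e f : Sym2 V) : Prop := e ∈ D ∧ f ∈ D ∧ Share e f

def Reach (D : Finset (Sym2 V)) : Sym2 V → Sym2 V → Prop :=
  Relation.ReflTransGen (Step D)

lemma reach_symm {D : Finset (Sym2 V)} {e f : Sym2 V} (h : Reach D e f) : Reach D f e :=
  (@Relation.ReflTransGen.stdSymm _ (Step D)
    ⟨fun _ _ hx => ⟨hx.2.1, hx.1, hx.2.2.symm⟩⟩).symm _ _ h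

/-- The connected component (class) of `e` within the edge set `D`. -/
noncomputable def cls (D : Finset (Sym2 V)) (e : Sym2 V) : Finset (Sym2 V) :=
  D.filter (Reach D e)

lemma mem_cls {D : Finset (Sym2 V)} {e f : Sym2 V} :
    f ∈ cls D e ↔ f ∈ D ∧ Reach D e f := by simp [cls]

lemma self_mem_cls {D : Finset (Sym2 V)} {e : Sym2 V} (he : e ∈ D) : e ∈ cls D e :=
  mem_cls.2 ⟨he, Relation.ReflTransGen.refl⟩

lemma cls_subset {D : Finset (Sym2 V)} {e : Sym2 V} : cls D e ⊆ D :=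
  Finset.filter_subset _ _

lemma cls_eq_of_mem {D : Finset (Sym2 V)} {e f : Sym2 V} (h : f ∈ cls D e) :
    cls D e = cls D f := by
  obtain ⟨hfD, hreach⟩ := mem_cls.1 h
  ext g
  simp only [mem_cls]
  constructor
  · rintro ⟨hgD, hg⟩
    exact ⟨hgD, Relation.ReflTransGen.trans (reach_symm hreach) hg⟩
  · rintro ⟨hgD, hg⟩
    exact ⟨hgD, Relation.ReflTransGen.trans hreach hg⟩

lemma cls_closed {D : Finset (Sym2 V)} {e f g : Sym2 V} (hf : f ∈ cls D e)
    (hg : g ∈ D) (hshare : Share f g) : g ∈ cls D e := by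
  obtain ⟨hfD, hreach⟩ := mem_cls.1 hf
  exact mem_cls.2 ⟨hg, hreach.tail ⟨hfD, hg, hshare⟩⟩


noncomputable def chain (D : Finset (Sym2 V)) (e₀ : Sym2 V) : ℕ → Finset (Sym2 V)
  | 0 => {e₀}
  | n + 1 => D.filter fun g => ∃ f ∈ chain D e₀ n, Share f g

lemma chain_subset {D : Finset (Sym2 V)} {e₀ : Sym2 V} (he₀ : e₀ ∈ D) :
    ∀ n, chain D e₀ n ⊆ D
  | 0 => by simpa [chain] using he₀
  | n + 1 => Finset.filter_subset _ _

lemma chain_mono_succ {D : Finset (Sym2 V)} {e₀ : Sym2 V} (he₀ : e₀ ∈ D) (n : ℕ) :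
    chain D e₀ n ⊆ chain D e₀ (n + 1) := by
  intro g hg
  simp only [chain, Finset.mem_filter]
  exact ⟨chain_subset he₀ n hg, g, hg, share_self g⟩

lemma chain_mono {D : Finset (Sym2 V)} {e₀ : Sym2 V} (he₀ : e₀ ∈ D) {m n : ℕ} (h : m ≤ n) :
    chain D e₀ m ⊆ chain D e₀ n := by
  induction h with
  | refl => exact fun _ h => h
  | step _ ih => rename_i k hk; exact fun x hx => chain_mono_succ he₀ k (ih hx)

lemma chain_subset_cls {D : Finset (Sym2 V)} {e₀ : Sym2 V} (he₀ : e₀ ∈ D) :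
    ∀ n, chain D e₀ n ⊆ cls D e₀
  | 0 => by
      intro g hg
      simp only [chain, Finset.mem_singleton] at hg
      subst hg; exact self_mem_cls he₀
  | n + 1 => by
      intro g hg
      simp only [chain, Finset.mem_filter] at hg
      obtain ⟨hgD, f, hf, hs⟩ := hg
      exact cls_closed (chain_subset_cls he₀ n hf) hgD hs

lemma reach_mem_chain {D : Finset (Sym2 V)} {e₀ f : Sym2 V} (h : Reach D e₀ f) :
    ∃ n, f ∈ chain D e₀ n := by
  induction h with
  | refl => exact ⟨0, by simp [chain]⟩
  | tail _ hstep ih =>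
      obtain ⟨n, hn⟩ := ih
      rename_i b c _
      exact ⟨n + 1, by
        simp only [chain, Finset.mem_filter]
        exact ⟨hstep.2.1, b, hn, hstep.2.2⟩⟩

lemma exists_uniform {α : Type*} {s : Finset α} {Q : α → ℕ → Prop}
    (mono : ∀ a, ∀ m n : ℕ, m ≤ n → Q a m → Q a n) (h : ∀ a ∈ s, ∃ n, Q a n) :
    ∃ n, ∀ a ∈ s, Q a n := by
  classical
  induction s using Finset.induction_on with
  | empty => exact ⟨0, by simp⟩
  | insert _ _ hnm ih =>
      rename_i a s
      obtain ⟨n, hn⟩ := ih fun b hb => h b (Finset.mem_insert_of_mem hb)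
      obtain ⟨m, hm⟩ := h a (Finset.mem_insert_self a s)
      refine ⟨max n m, fun b hb => ?_⟩
      rcases Finset.mem_insert.1 hb with rfl | hb
      · exact mono b m _ (le_max_right n m) hm
      · exact mono b n _ (le_max_left n m) (hn b hb)

lemma cls_eq_chain {D : Finset (Sym2 V)} {e₀ : Sym2 V} (he₀ : e₀ ∈ D) :
    ∃ n, cls D e₀ = chain D e₀ n := by
  obtain ⟨n, hn⟩ := exists_uniform (s := cls D e₀) (Q := fun f n => f ∈ chain D e₀ n)
    (fun a m n hmn ha => chain_mono he₀ hmn ha)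
    (fun f hf => reach_mem_chain (mem_cls.1 hf).2)
  exact ⟨n, Finset.Subset.antisymm (fun f hf => hn f hf) (chain_subset_cls he₀ n)⟩


lemma vset_singleton_card [Fintype V] (e₀ : Sym2 V) : (Vset ({e₀} : Finset (Sym2 V))).card ≤ 2 := by
  induction e₀ using Sym2.ind with
  | _ x y =>
    have hsub : Vset ({s(x, y)} : Finset (Sym2 V)) ⊆ {x, y} := by
      intro v hv
      rw [mem_Vset] at hv
      obtain ⟨e, he, hve⟩ := hv
      simp only [Finset.mem_singleton] at he
      subst he
      rw [Sym2.mem_iff] at hve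
      simpa using hve
    calc (Vset ({s(x, y)} : Finset (Sym2 V))).card ≤ ({x, y} : Finset V).card :=
          Finset.card_le_card hsub
      _ ≤ 2 := Finset.card_insert_le x {y} |>.trans (by simp)

lemma vset_chain_card [Fintype V] {D : Finset (Sym2 V)} {e₀ : Sym2 V} (he₀ : e₀ ∈ D) :
    ∀ n, (Vset (chain D e₀ n)).card ≤ (chain D e₀ n).card + 1
  | 0 => by
      have := vset_singleton_card e₀
      simp only [chain]
      calc (Vset ({e₀} : Finset (Sym2 V))).card ≤ 2 := this
        _ ≤ ({e₀} : Finset (Sym2 V)).card + 1 := by simp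
  | n + 1 => by
      set C := chain D e₀ n with hC
      set C' := chain D e₀ (n + 1) with hC'
      have hsub : C ⊆ C' := chain_mono_succ he₀ n
      -- each vertex of Vset C' \ Vset C maps injectively to an edge of C' \ C
      have hkey : ((Vset C') \ (Vset C)).card ≤ (C' \ C).card := by
        have hch : ∀ v ∈ (Vset C') \ (Vset C), ∃ e ∈ C', v ∈ e := by
          intro v hv
          have := (Finset.mem_sdiff.1 hv).1
          rw [mem_Vset] at this
          exact this
        refine Finset.card_le_card_of_injOn
          (fun v => if h : ∃ e ∈ C', v ∈ e then h.choose else e₀) ?_ ?_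
        · intro v hv
          have h := hch v hv
          simp only [dif_pos h]
          have he : h.choose ∈ C' ∧ v ∈ h.choose := ⟨h.choose_spec.1, h.choose_spec.2⟩
          rw [Finset.mem_coe, Finset.mem_sdiff]
          refine ⟨he.1, fun hmem => ?_⟩
          exact (Finset.mem_sdiff.1 (Finset.mem_coe.1 hv)).2 (mem_Vset.2 ⟨h.choose, hmem, he.2⟩)
        · intro v hv w hw heq
          simp only [Finset.coe_sdiff, Set.mem_diff, Finset.mem_coe] at hv hw
          have hv' : v ∈ (Vset C') \ (Vset C) := Finset.mem_sdiff.2 hv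
          have hw' : w ∈ (Vset C') \ (Vset C) := Finset.mem_sdiff.2 hw
          have h1 := hch v hv'
          have h2 := hch w hw'
          simp only [dif_pos h1, dif_pos h2] at heq
          set e := h1.choose with he_def
          have hve : v ∈ e := h1.choose_spec.2
          have heC' : e ∈ C' := h1.choose_spec.1
          have hwe : w ∈ e := heq ▸ h2.choose_spec.2
          -- e has a vertex in Vset C
          have : e ∈ D.filter fun g => ∃ f ∈ C, Share f g := by
            simpa [hC', chain] using heC'
          obtain ⟨-, f, hf, u, huf, hue⟩ := Finset.mem_filter.1 this
          have huC : u ∈ Vset C := mem_Vset.2 ⟨f, hf, huf⟩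
          have hvC : v ∉ Vset C := hv.2
          have hwC : w ∉ Vset C := hw.2
          -- v, w, u all in e; v ≠ u, w ≠ u forces v = w
          by_contra hvw
          have he_eq : e = s(v, w) := (Sym2.mem_and_mem_iff hvw).1 ⟨hve, hwe⟩
          rw [he_eq, Sym2.mem_iff] at hue
          rcases hue with rfl | rfl
          · exact hvC huC
          · exact hwC huC
      have hcover : Vset C' ⊆ Vset C ∪ ((Vset C') \ (Vset C)) := by
        intro v hv
        by_cases h : v ∈ Vset C
        · exact Finset.mem_union_left _ h
        · exact Finset.mem_union_right _ (Finset.mem_sdiff.2 ⟨hv, h⟩)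
      have hcards : (C' \ C).card + C.card = C'.card := Finset.card_sdiff_add_card_eq_card hsub
      have ih := vset_chain_card he₀ n
      rw [← hC] at ih
      calc (Vset C').card ≤ (Vset C ∪ ((Vset C') \ (Vset C))).card := Finset.card_le_card hcover
        _ ≤ (Vset C).card + ((Vset C') \ (Vset C)).card := Finset.card_union_le _ _
        _ ≤ (C.card + 1) + (C' \ C).card := by
            have := hkey; omega
        _ = C'.card + 1 := by omega

lemma vset_cls_card [Fintype V] {D : Finset (Sym2 V)} {e₀ : Sym2 V} (he₀ : e₀ ∈ D) :
    (Vset (cls D e₀)).card ≤ (cls D e₀).card + 1 := by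
  obtain ⟨n, hn⟩ := cls_eq_chain he₀
  rw [hn]
  exact vset_chain_card he₀ n


lemma two_mul_card_le [Fintype V] {S : Finset (Sym2 V)} (hm : MatchF S)
    (hd : ∀ e ∈ S, ¬ e.IsDiag) {W : Finset V} (hw : ∀ e ∈ S, ∀ v ∈ e, v ∈ W) :
    2 * S.card ≤ W.card := by
  classical
  set B : Finset V := S.biUnion (fun e => Finset.univ.filter (· ∈ e)) with hB
  have hdisj : ∀ e ∈ S, ∀ f ∈ S, e ≠ f →
      Disjoint (Finset.univ.filter (· ∈ e)) (Finset.univ.filter (· ∈ f)) := by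
    intro e he f hf hne
    rw [Finset.disjoint_left]
    intro v hv hv'
    simp only [Finset.mem_filter] at hv hv'
    exact hm e he f hf hne v hv.2 hv'.2
  have hcard : B.card = ∑ e ∈ S, (Finset.univ.filter (· ∈ e)).card :=
    Finset.card_biUnion hdisj
  have hfib : ∀ e ∈ S, (Finset.univ.filter (· ∈ e)).card = 2 := by
    intro e he
    induction e using Sym2.ind with
    | _ x y =>
      have hxy : x ≠ y := fun h => hd _ he (by simp [h])
      have : (Finset.univ.filter (· ∈ s(x, y))) = {x, y} := by
        ext v; simp [Sym2.mem_iff]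
      rw [this, Finset.card_insert_of_notMem (by simp [hxy]), Finset.card_singleton]
  have hBW : B ⊆ W := by
    intro v hv
    rw [hB, Finset.mem_biUnion] at hv
    obtain ⟨e, he, hve⟩ := hv
    exact hw e he v (Finset.mem_filter.1 hve).2
  calc 2 * S.card = ∑ e ∈ S, 2 := by rw [Finset.sum_const, smul_eq_mul, mul_comm]
    _ = B.card := by rw [hcard]; exact (Finset.sum_congr rfl hfib).symm
    _ ≤ W.card := Finset.card_le_card hBW

lemma sum_inter_classes [Fintype V] (D S : Finset (Sym2 V)) (hS : S ⊆ D) :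
    ∑ C ∈ D.image (cls D), (S ∩ C).card = S.card := by
  classical
  have hdisj : ∀ C₁ ∈ D.image (cls D), ∀ C₂ ∈ D.image (cls D), C₁ ≠ C₂ →
      Disjoint (S ∩ C₁) (S ∩ C₂) := by
    intro C₁ h₁ C₂ h₂ hne
    rw [Finset.disjoint_left]
    intro e he₁ he₂
    obtain ⟨f₁, hf₁, rfl⟩ := Finset.mem_image.1 h₁
    obtain ⟨f₂, hf₂, rfl⟩ := Finset.mem_image.1 h₂
    have h1 : e ∈ cls D f₁ := (Finset.mem_inter.1 he₁).2
    have h2 : e ∈ cls D f₂ := (Finset.mem_inter.1 he₂).2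
    exact hne ((cls_eq_of_mem h1).trans (cls_eq_of_mem h2).symm)
  have hcover : (D.image (cls D)).biUnion (fun C => S ∩ C) = S := by
    ext e
    rw [Finset.mem_biUnion]
    constructor
    · rintro ⟨C, _, heC⟩
      exact (Finset.mem_inter.1 heC).1
    · intro he
      exact ⟨cls D e, Finset.mem_image_of_mem _ (hS he),
        Finset.mem_inter.2 ⟨he, self_mem_cls (hS he)⟩⟩
  conv_rhs => rw [← hcover]
  rw [Finset.card_biUnion hdisj]

noncomputable def sigF (rank : Sym2 V → ℕ) (S : Finset (Sym2 V)) (i : ℕ) : ℕ :=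
  (S.filter fun e => rank e = i).card

lemma signature_coe (rank : Sym2 V → ℕ) (S : Finset (Sym2 V)) (i : ℕ) :
    signature rank (↑S : Set (Sym2 V)) i = sigF rank S i := by
  classical
  have : {e ∈ (↑S : Set (Sym2 V)) | rank e = i} = ↑(S.filter fun e => rank e = i) := by
    ext e; simp
  rw [signature, this, Set.ncard_coe_finset, sigF]

lemma card_eq_sum_sigF {rank : Sym2 V → ℕ} {r : ℕ} {S : Finset (Sym2 V)}
    (hb : ∀ e ∈ S, 1 ≤ rank e ∧ rank e ≤ r) :
    S.card = ∑ i ∈ Finset.Icc 1 r, sigF rank S i := by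
  classical
  exact Finset.card_eq_sum_card_fiberwise fun e he => by
    rw [Finset.mem_coe, Finset.mem_Icc]; exact hb e he

lemma flip_match {M N C D : Finset (Sym2 V)} (hMm : MatchF M) (hNm : MatchF N)
    (hMND : ∀ e ∈ M, e ∉ N → e ∈ D)
    (hclosed : ∀ f ∈ C, ∀ g ∈ D, Share f g → g ∈ C) :
    MatchF ((M \ C) ∪ (N ∩ C)) := by
  classical
  have key : ∀ e ∈ M \ C, ∀ f ∈ N ∩ C, e ≠ f → ∀ v : V, v ∈ e → v ∉ f := by
    intro e he f hf hne v hv hv'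
    rw [Finset.mem_sdiff] at he
    rw [Finset.mem_inter] at hf
    by_cases heN : e ∈ N
    · exact hNm e heN f hf.1 hne v hv hv'
    · exact he.2 (hclosed f hf.2 e (hMND e he.1 heN) ⟨v, hv', hv⟩)
  intro e he f hf hne v hv hv'
  rw [Finset.mem_union] at he hf
  rcases he with he | he <;> rcases hf with hf | hf
  · exact hMm e (Finset.mem_sdiff.1 he).1 f (Finset.mem_sdiff.1 hf).1 hne v hv hv'
  · exact key e he f hf hne v hv hv'
  · exact key f hf e he hne.symm v hv' hv
  · exact hNm e (Finset.mem_inter.1 he).1 f (Finset.mem_inter.1 hf).1 hne v hv hv'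

lemma sigF_flip (rank : Sym2 V → ℕ) (M N C : Finset (Sym2 V)) (i : ℕ) :
    sigF rank ((M \ C) ∪ (N ∩ C)) i + sigF rank (M ∩ C) i
      = sigF rank M i + sigF rank (N ∩ C) i := by
  classical
  have hd1 : Disjoint (M \ C) (N ∩ C) := by
    rw [Finset.disjoint_left]
    intro e he he'
    exact (Finset.mem_sdiff.1 he).2 (Finset.mem_inter.1 he').2
  have hd2 : Disjoint (M \ C) (M ∩ C) := by
    rw [Finset.disjoint_left]
    intro e he he'
    exact (Finset.mem_sdiff.1 he).2 (Finset.mem_inter.1 he').2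
  have hMsplit : (M \ C) ∪ (M ∩ C) = M := Finset.sdiff_union_inter M C
  have h1 : sigF rank ((M \ C) ∪ (N ∩ C)) i
      = sigF rank (M \ C) i + sigF rank (N ∩ C) i := by
    unfold sigF
    rw [Finset.filter_union, Finset.card_union_of_disjoint
      (Finset.disjoint_filter_filter hd1)]
  have h2 : sigF rank (M \ C) i + sigF rank (M ∩ C) i = sigF rank M i := by
    unfold sigF
    rw [← Finset.card_union_of_disjoint (Finset.disjoint_filter_filter hd2),
      ← Finset.filter_union, hMsplit]
  omega

lemma mem_H_edgeSet {G H : SimpleGraph V} {a : V}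
    (hH : ∀ u v, H.Adj u v ↔ G.Adj u v ∧ u ≠ a ∧ v ≠ a)
    {e : Sym2 V} (heG : e ∈ G.edgeSet) (hae : a ∉ e) : e ∈ H.edgeSet := by
  induction e using Sym2.ind with
  | _ x y =>
    rw [Sym2.mem_iff] at hae
    push_neg at hae
    rw [SimpleGraph.mem_edgeSet] at heG ⊢
    exact (hH x y).2 ⟨heG, fun h => hae.1 h.symm, fun h => hae.2 h.symm⟩

lemma core [Fintype V] (G H : SimpleGraph V) (rank : Sym2 V → ℕ) (r : ℕ)
    (hr : RanksBounded G rank r) (a : V)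
    (hH : ∀ u v, H.Adj u v ↔ G.Adj u v ∧ u ≠ a ∧ v ≠ a)
    (M M' : Finset (Sym2 V))
    (hMG : ∀ e ∈ M, e ∈ G.edgeSet) (hMm : MatchF M)
    (hMmax : ∀ N, IsMatchingIn G N → ¬ SigGt r (signature rank N) (signature rank ↑M))
    (hM'H : ∀ e ∈ M', e ∈ H.edgeSet) (hM'm : MatchF M')
    (hM'max : ∀ N, IsMatchingIn H N → ¬ SigGt r (signature rank N) (signature rank ↑M'))
    (C : Finset (Sym2 V)) (hC : C ⊆ (M \ M') ∪ (M' \ M))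
    (hclosed : ∀ f ∈ C, ∀ g ∈ (M \ M') ∪ (M' \ M), Share f g → g ∈ C)
    (haC : ∀ e ∈ C, a ∉ e)
    (hne : (M ∩ C).card ≠ (M' ∩ C).card) : False := by
  classical
  have hHG : ∀ e ∈ H.edgeSet, e ∈ G.edgeSet := by
    intro e he
    induction e using Sym2.ind with
    | _ x y =>
      rw [SimpleGraph.mem_edgeSet] at he ⊢
      exact ((hH x y).1 he).1
  have hM'G : ∀ e ∈ M', e ∈ G.edgeSet := fun e he => hHG e (hM'H e he)
  set x : ℕ → ℕ := fun i => sigF rank (M ∩ C) i with hx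
  set y : ℕ → ℕ := fun i => sigF rank (M' ∩ C) i with hy
  have hxsum : (M ∩ C).card = ∑ i ∈ Finset.Icc 1 r, x i :=
    card_eq_sum_sigF fun e he => hr e (hMG e (Finset.mem_inter.1 he).1)
  have hysum : (M' ∩ C).card = ∑ i ∈ Finset.Icc 1 r, y i :=
    card_eq_sum_sigF fun e he => hr e (hM'G e (Finset.mem_inter.1 he).1)
  -- the least rank where the two sides of the component differ
  have hexists : ((Finset.Icc 1 r).filter fun i => x i ≠ y i).Nonempty := by
    by_contra hno
    rw [Finset.not_nonempty_iff_eq_empty, Finset.filter_eq_empty_iff] at hno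
    apply hne
    rw [hxsum, hysum]
    exact Finset.sum_congr rfl fun i hi => by
      have := hno hi; simpa using this
  set k := ((Finset.Icc 1 r).filter fun i => x i ≠ y i).min' hexists with hk
  have hkmem := Finset.min'_mem _ hexists
  rw [← hk] at hkmem
  rw [Finset.mem_filter, Finset.mem_Icc] at hkmem
  obtain ⟨⟨hk1, hkr⟩, hkne⟩ := hkmem
  have hkmin : ∀ j, 1 ≤ j → j < k → x j = y j := by
    intro j h1 h2
    by_contra hne'
    have hjr : j ≤ r := le_trans (le_of_lt h2) hkr
    have : k ≤ j := Finset.min'_le _ j (by rw [Finset.mem_filter, Finset.mem_Icc]; exact ⟨⟨h1, hjr⟩, hne'⟩)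
    omega
  -- closure hypothesis with roles of M, M' swapped
  have hclosed' : ∀ f ∈ C, ∀ g ∈ (M' \ M) ∪ (M \ M'), Share f g → g ∈ C := by
    intro f hf g hg hs
    exact hclosed f hf g (by rwa [Finset.union_comm] at hg) hs
  rcases lt_or_gt_of_ne hkne with hlt | hgt
  · -- x k < y k : flipping M inside G improves the signature of M
    set F := (M \ C) ∪ (M' ∩ C) with hF
    have hFm : MatchF F := flip_match hMm hM'm
      (fun e he hnot => Finset.mem_union_left _ (Finset.mem_sdiff.2 ⟨he, hnot⟩)) hclosed
    have hFG : (↑F : Set (Sym2 V)) ⊆ G.edgeSet := by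
      intro e he
      rw [Finset.mem_coe, hF, Finset.mem_union] at he
      rcases he with he | he
      · exact hMG e (Finset.mem_sdiff.1 he).1
      · exact hM'G e (Finset.mem_inter.1 he).1
    have hFmatch : IsMatchingIn G (↑F : Set (Sym2 V)) :=
      ⟨hFG, fun e he f hf hne' v hv => hFm e he f hf hne' v hv⟩
    refine hMmax (↑F) hFmatch ⟨k, hk1, hkr, ?_, ?_⟩
    · intro j h1 h2
      rw [signature_coe, signature_coe]
      have := sigF_flip rank M M' C j
      have hxy := hkmin j h1 h2
      simp only [← hF] at this
      have e1 : x j = sigF rank (M ∩ C) j := rfl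
      have e2 : y j = sigF rank (M' ∩ C) j := rfl
      omega
    · rw [signature_coe, signature_coe]
      have := sigF_flip rank M M' C k
      simp only [← hF] at this
      have e1 : x k = sigF rank (M ∩ C) k := rfl
      have e2 : y k = sigF rank (M' ∩ C) k := rfl
      omega
  · -- x k > y k : flipping M' inside H improves the signature of M'
    set F := (M' \ C) ∪ (M ∩ C) with hF
    have hFm : MatchF F := flip_match hM'm hMm
      (fun e he hnot => Finset.mem_union_left _ (Finset.mem_sdiff.2 ⟨he, hnot⟩)) hclosed'
    have hFH : (↑F : Set (Sym2 V)) ⊆ H.edgeSet := by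
      intro e he
      rw [Finset.mem_coe, hF, Finset.mem_union] at he
      rcases he with he | he
      · exact hM'H e (Finset.mem_sdiff.1 he).1
      · refine mem_H_edgeSet hH (hMG e (Finset.mem_inter.1 he).1)
          (haC e (Finset.mem_inter.1 he).2)
    have hFmatch : IsMatchingIn H (↑F : Set (Sym2 V)) :=
      ⟨hFH, fun e he f hf hne' v hv => hFm e he f hf hne' v hv⟩
    refine hM'max (↑F) hFmatch ⟨k, hk1, hkr, ?_, ?_⟩
    · intro j h1 h2
      rw [signature_coe, signature_coe]
      have := sigF_flip rank M' M C j
      have hxy := hkmin j h1 h2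
      simp only [← hF] at this
      have e1 : x j = sigF rank (M ∩ C) j := rfl
      have e2 : y j = sigF rank (M' ∩ C) j := rfl
      omega
    · rw [signature_coe, signature_coe]
      have := sigF_flip rank M' M C k
      simp only [← hF] at this
      have e1 : x k = sigF rank (M ∩ C) k := rfl
      have e2 : y k = sigF rank (M' ∩ C) k := rfl
      omega

end RMAux


open RMAux in
/-- Let `H` be obtained from `G` by deleting an applicant vertex `a`
together with all edges incident on it. If `M` is a rank-maximal matching of `G`
and `M'` is a rank-maximal matching of `H`, then `|M| - 1 ≤ |M'| ≤ |M|`. -/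
theorem delete_vertex_cardinality [Fintype V]
    (G H : SimpleGraph V) (side : V → Bool)
    (hbipG : IsBipartiteWith G side)
    (rank : Sym2 V → ℕ) (r : ℕ) (hr : RanksBounded G rank r)
    (a : V) (ha : side a = false)
    (hH : ∀ u v, H.Adj u v ↔ G.Adj u v ∧ u ≠ a ∧ v ≠ a)
    (M M' : Set (Sym2 V))
    (hM : IsRankMaximal G rank r M) (hM' : IsRankMaximal H rank r M') :
    M.ncard - 1 ≤ M'.ncard ∧ M'.ncard ≤ M.ncard := by
  classical
  obtain ⟨⟨hMG, hMm⟩, hMmax⟩ := hM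
  obtain ⟨⟨hM'H, hM'm⟩, hM'max⟩ := hM'
  have hMfin : M.Finite := Set.toFinite M
  have hM'fin : M'.Finite := Set.toFinite M'
  set Mf : Finset (Sym2 V) := hMfin.toFinset with hMf_def
  set M'f : Finset (Sym2 V) := hM'fin.toFinset with hM'f_def
  have hMfc : (↑Mf : Set (Sym2 V)) = M := hMfin.coe_toFinset
  have hM'fc : (↑M'f : Set (Sym2 V)) = M' := hM'fin.coe_toFinset
  have hMcard : M.ncard = Mf.card := Set.ncard_eq_toFinset_card M hMfin
  have hM'card : M'.ncard = M'f.card := Set.ncard_eq_toFinset_card M' hM'fin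
  have hMGf : ∀ e ∈ Mf, e ∈ G.edgeSet := fun e he => hMG (hMfin.mem_toFinset.1 he)
  have hM'Hf : ∀ e ∈ M'f, e ∈ H.edgeSet := fun e he => hM'H (hM'fin.mem_toFinset.1 he)
  have hMmf : MatchF Mf := fun e he f hf hne v hv =>
    hMm e (hMfin.mem_toFinset.1 he) f (hMfin.mem_toFinset.1 hf) hne v hv
  have hM'mf : MatchF M'f := fun e he f hf hne v hv =>
    hM'm e (hM'fin.mem_toFinset.1 he) f (hM'fin.mem_toFinset.1 hf) hne v hv
  have hMmaxf : ∀ N, IsMatchingIn G N →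
      ¬ SigGt r (signature rank N) (signature rank ↑Mf) := by
    intro N hN; rw [hMfc]; exact hMmax N hN
  have hM'maxf : ∀ N, IsMatchingIn H N →
      ¬ SigGt r (signature rank N) (signature rank ↑M'f) := by
    intro N hN; rw [hM'fc]; exact hM'max N hN
  have hHG : ∀ e ∈ H.edgeSet, e ∈ G.edgeSet := by
    intro e he
    induction e using Sym2.ind with
    | _ x y =>
      rw [SimpleGraph.mem_edgeSet] at he ⊢
      exact ((hH x y).1 he).1
  have haM' : ∀ e ∈ M'f, a ∉ e := by
    intro e he hae
    have heH := hM'Hf e he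
    induction e using Sym2.ind with
    | _ x y =>
      rw [SimpleGraph.mem_edgeSet] at heH
      obtain ⟨-, hx, hy⟩ := (hH x y).1 heH
      rw [Sym2.mem_iff] at hae
      rcases hae with rfl | rfl
      · exact hx rfl
      · exact hy rfl
  set D : Finset (Sym2 V) := (Mf \ M'f) ∪ (M'f \ Mf) with hD_def
  set comps : Finset (Finset (Sym2 V)) := D.image (cls D) with hcomps_def
  have hDG : ∀ e ∈ D, e ∈ G.edgeSet := by
    intro e he
    rw [hD_def, Finset.mem_union] at he
    rcases he with he | he
    · exact hMGf e (Finset.mem_sdiff.1 he).1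
    · exact hHG e (hM'Hf e (Finset.mem_sdiff.1 he).1)
  -- every class is of the form `cls D e₀`
  have hrep : ∀ C ∈ comps, ∃ e₀ ∈ D, C = cls D e₀ := by
    intro C hC
    obtain ⟨e₀, he₀, rfl⟩ := Finset.mem_image.1 hC
    exact ⟨e₀, he₀, rfl⟩
  -- each class splits into its M-part and its M'-part
  have hsplitC : ∀ C ∈ comps, C.card = (Mf ∩ C).card + (M'f ∩ C).card := by
    intro C hC
    obtain ⟨e₀, he₀, rfl⟩ := hrep C hC
    have hCD : cls D e₀ ⊆ D := cls_subset
    have hcover : cls D e₀ = (Mf ∩ cls D e₀) ∪ (M'f ∩ cls D e₀) := by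
      ext e
      constructor
      · intro he
        have heD := hCD he
        rw [hD_def, Finset.mem_union] at heD
        rcases heD with h | h
        · exact Finset.mem_union_left _ (Finset.mem_inter.2 ⟨(Finset.mem_sdiff.1 h).1, he⟩)
        · exact Finset.mem_union_right _ (Finset.mem_inter.2 ⟨(Finset.mem_sdiff.1 h).1, he⟩)
      · intro he
        rcases Finset.mem_union.1 he with h | h
        · exact (Finset.mem_inter.1 h).2
        · exact (Finset.mem_inter.1 h).2
    have hdisj : Disjoint (Mf ∩ cls D e₀) (M'f ∩ cls D e₀) := by
      rw [Finset.disjoint_left]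
      intro e he he'
      have h1 := Finset.mem_inter.1 he
      have h2 := Finset.mem_inter.1 he'
      have heD := hCD h1.2
      rw [hD_def, Finset.mem_union] at heD
      rcases heD with h | h
      · exact (Finset.mem_sdiff.1 h).2 h2.1
      · exact (Finset.mem_sdiff.1 h).2 h1.1
    conv_lhs => rw [hcover]
    rw [Finset.card_union_of_disjoint hdisj]
  -- vertex–edge counting bounds inside each class
  have hvtx : ∀ C ∈ comps, (Vset C).card ≤ C.card + 1 := by
    intro C hC
    obtain ⟨e₀, he₀, rfl⟩ := hrep C hC
    exact vset_cls_card he₀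
  have hMcount : ∀ C ∈ comps, 2 * (Mf ∩ C).card ≤ (Vset C).card := by
    intro C hC
    refine two_mul_card_le (hMmf.mono (Finset.inter_subset_left)) ?_ ?_
    · intro e he
      exact G.not_isDiag_of_mem_edgeSet (hMGf e (Finset.mem_inter.1 he).1)
    · intro e he v hv
      exact mem_Vset.2 ⟨e, (Finset.mem_inter.1 he).2, hv⟩
  have hM'refined : ∀ C ∈ comps, a ∈ Vset C →
      2 * (M'f ∩ C).card + 1 ≤ (Vset C).card := by
    intro C hC haV
    have h2 : 2 * (M'f ∩ C).card ≤ ((Vset C).erase a).card := by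
      refine two_mul_card_le (hM'mf.mono (Finset.inter_subset_left)) ?_ ?_
      · intro e he
        exact G.not_isDiag_of_mem_edgeSet
          (hHG e (hM'Hf e (Finset.mem_inter.1 he).1))
      · intro e he v hv
        refine Finset.mem_erase.2 ⟨?_, mem_Vset.2 ⟨e, (Finset.mem_inter.1 he).2, hv⟩⟩
        intro hva
        exact haM' e (Finset.mem_inter.1 he).1 (hva ▸ hv)
    rw [Finset.card_erase_of_mem haV] at h2
    have : 1 ≤ (Vset C).card := Finset.card_pos.2 ⟨a, haV⟩
    omega
  -- rank-maximality forces equality on classes avoiding `a`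
  have hcore : ∀ C ∈ comps, a ∉ Vset C → (Mf ∩ C).card = (M'f ∩ C).card := by
    intro C hC haV
    obtain ⟨e₀, he₀, rfl⟩ := hrep C hC
    by_contra hne
    refine core G H rank r hr a hH Mf M'f hMGf hMmf hMmaxf hM'Hf hM'mf hM'maxf
      (cls D e₀) cls_subset (fun f hf g hg hs => cls_closed hf hg hs) ?_ hne
    intro e he hae
    exact haV (mem_Vset.2 ⟨e, he, hae⟩)
  -- the sums over all classes recover the sizes of the two sides of `D`
  have hconvM : ∀ C ∈ comps, ((Mf \ M'f) ∩ C).card = (Mf ∩ C).card := by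
    intro C hC
    obtain ⟨e₀, he₀, rfl⟩ := hrep C hC
    congr 1
    ext e
    simp only [Finset.mem_inter, Finset.mem_sdiff]
    constructor
    · rintro ⟨⟨h1, -⟩, h2⟩; exact ⟨h1, h2⟩
    · rintro ⟨h1, h2⟩
      have heD := cls_subset h2
      rw [hD_def, Finset.mem_union] at heD
      rcases heD with h | h
      · exact ⟨Finset.mem_sdiff.1 h, h2⟩
      · exact absurd h1 (Finset.mem_sdiff.1 h).2
  have hconvM' : ∀ C ∈ comps, ((M'f \ Mf) ∩ C).card = (M'f ∩ C).card := by
    intro C hC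
    obtain ⟨e₀, he₀, rfl⟩ := hrep C hC
    congr 1
    ext e
    simp only [Finset.mem_inter, Finset.mem_sdiff]
    constructor
    · rintro ⟨⟨h1, -⟩, h2⟩; exact ⟨h1, h2⟩
    · rintro ⟨h1, h2⟩
      have heD := cls_subset h2
      rw [hD_def, Finset.mem_union] at heD
      rcases heD with h | h
      · exact absurd h1 (Finset.mem_sdiff.1 h).2
      · exact ⟨Finset.mem_sdiff.1 h, h2⟩
  have hsumM : ∑ C ∈ comps, (Mf ∩ C).card = (Mf \ M'f).card := by
    rw [← sum_inter_classes D (Mf \ M'f) Finset.subset_union_left]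
    exact (Finset.sum_congr rfl hconvM).symm
  have hsumM' : ∑ C ∈ comps, (M'f ∩ C).card = (M'f \ Mf).card := by
    rw [← sum_inter_classes D (M'f \ Mf) Finset.subset_union_right]
    exact (Finset.sum_congr rfl hconvM').symm
  -- at most one class touches `a`
  have hauniq : ∀ C ∈ comps, ∀ C' ∈ comps, a ∈ Vset C → a ∈ Vset C' → C = C' := by
    have hedge : ∀ C ∈ comps, a ∈ Vset C → ∃ f ∈ C, f ∈ Mf ∧ a ∈ f := by
      intro C hC haV
      obtain ⟨f, hf, haf⟩ := mem_Vset.1 haV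
      obtain ⟨e₀, he₀, rfl⟩ := hrep C hC
      have hfD := cls_subset hf
      rw [hD_def, Finset.mem_union] at hfD
      rcases hfD with h | h
      · exact ⟨f, hf, (Finset.mem_sdiff.1 h).1, haf⟩
      · exact absurd haf (haM' f (Finset.mem_sdiff.1 h).1)
    intro C hC C' hC' haV haV'
    obtain ⟨f, hf, hfM, haf⟩ := hedge C hC haV
    obtain ⟨f', hf', hf'M, haf'⟩ := hedge C' hC' haV'
    have hff' : f = f' := by
      by_contra hne
      exact hMmf f hfM f' hf'M hne a haf haf'
    obtain ⟨e₀, he₀, rfl⟩ := hrep C hC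
    obtain ⟨e₁, he₁, rfl⟩ := hrep C' hC'
    rw [cls_eq_of_mem hf, cls_eq_of_mem hf', hff']
  -- upper bound : |M'| ≤ |M|
  have hub : (M'f \ Mf).card ≤ (Mf \ M'f).card := by
    rw [← hsumM, ← hsumM']
    refine Finset.sum_le_sum ?_
    intro C hC
    by_cases haV : a ∈ Vset C
    · have h1 := hM'refined C hC haV
      have h2 := hvtx C hC
      have h3 := hsplitC C hC
      omega
    · exact le_of_eq (hcore C hC haV).symm
  -- lower bound : |M| ≤ |M'| + 1
  have hlb : (Mf \ M'f).card ≤ (M'f \ Mf).card + 1 := by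
    rw [← hsumM, ← hsumM']
    by_cases hA : ∃ C ∈ comps, a ∈ Vset C
    · obtain ⟨C₀, hC₀, haC₀⟩ := hA
      rw [← Finset.add_sum_erase comps _ hC₀, ← Finset.add_sum_erase comps _ hC₀]
      have hrest : ∑ C ∈ comps.erase C₀, (Mf ∩ C).card
          = ∑ C ∈ comps.erase C₀, (M'f ∩ C).card := by
        refine Finset.sum_congr rfl ?_
        intro C hC
        have hCc := Finset.mem_of_mem_erase hC
        refine hcore C hCc fun haV => ?_
        exact (Finset.ne_of_mem_erase hC) (hauniq C hCc C₀ hC₀ haV haC₀)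
      have h1 := hMcount C₀ hC₀
      have h2 := hvtx C₀ hC₀
      have h3 := hsplitC C₀ hC₀
      omega
    · push_neg at hA
      have : ∀ C ∈ comps, (Mf ∩ C).card = (M'f ∩ C).card :=
        fun C hC => hcore C hC (hA C hC)
      rw [Finset.sum_congr rfl this]
      omega
  have e1 : (Mf ∩ M'f).card + (Mf \ M'f).card = Mf.card := Finset.card_inter_add_card_sdiff Mf M'f
  have e2 : (M'f ∩ Mf).card + (M'f \ Mf).card = M'f.card := Finset.card_inter_add_card_sdiff M'f Mf
  have e3 : (Mf ∩ M'f).card = (M'f ∩ Mf).card := by rw [Finset.inter_comm]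
  rw [hMcard, hM'card]
  omega
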